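/- With phase errors symmetric about zero with mean cosine ε_t, the mean composite channel gain satisfies E[H_t] = N(1 − ε_t²) + ε_t²·tr(R̄ R̄), where R̄ is the N×N matrix with entries R̄_{n,i} = E[|h_n||h_i|] (equal for both channel vectors). In particular, by π/4 ≤ R̄_{n,i} ≤ 1 for n ≠ i and R̄_{n,n} = 1, one has N + (π²/16)N(N−1)ε_t² ≤ E[H_t] < N + N(N−1)ε_t². -/

import Mathlib

open MeasureTheory ProbabilityTheory Real

lemma aux_term (a b θ ψ : ℝ) :
    (((a:ℂ) * Complex.exp (Complex.I * θ)) *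
      (starRingEnd ℂ) ((b:ℂ) * Complex.exp (Complex.I * ψ))).re
      = a * b * Real.cos (θ - ψ) := by
  have h1 : Complex.I * (θ:ℂ) = (θ:ℂ) * Complex.I := mul_comm _ _
  have h2 : Complex.I * (ψ:ℂ) = (ψ:ℂ) * Complex.I := mul_comm _ _
  rw [h1, h2, Complex.exp_mul_I, Complex.exp_mul_I]
  simp [Complex.mul_re, Complex.mul_im, Complex.cos_ofReal_re, Complex.sin_ofReal_re,
    Complex.cos_ofReal_im, Complex.sin_ofReal_im, Real.cos_sub]
  ring

lemma aux_expand {N : ℕ} (a θ : Fin N → ℝ) :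
    ‖∑ n : Fin N, ((a n : ℝ) : ℂ) * Complex.exp (Complex.I * (θ n : ℝ))‖ ^ 2
      = ∑ n : Fin N, ∑ i : Fin N, a n * a i * Real.cos (θ n - θ i) := by
  set z := ∑ n : Fin N, ((a n : ℝ) : ℂ) * Complex.exp (Complex.I * (θ n : ℝ)) with hz
  have h : (‖z‖ : ℝ) ^ 2 = (z * (starRingEnd ℂ) z).re := by
    rw [Complex.mul_conj]; simp [Complex.sq_norm]
  rw [h, hz, map_sum, Finset.sum_mul_sum, Complex.re_sum]
  refine Finset.sum_congr rfl fun n _ => ?_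
  rw [Complex.re_sum]
  exact Finset.sum_congr rfl fun i _ => aux_term _ _ _ _

theorem mean_gain_with_phase_errors {Ω : Type*} [MeasurableSpace Ω] (μ : Measure Ω)
    [IsProbabilityMeasure μ] (N : ℕ) (hN : 2 ≤ N)
    (g h : Fin N → Ω → ℂ) (φ : Fin N → Ω → ℝ) (εt : ℝ) (Rbar : Fin N → Fin N → ℝ)
    (hgmeas : ∀ n, Measurable (g n)) (hhmeas : ∀ n, Measurable (h n))
    (hφmeas : ∀ n, Measurable (φ n))
    (hL2 : ∀ n, MemLp (fun ω => ‖g n ω‖ * ‖h n ω‖) 2 μ)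
    (hεt : ∀ n, ∫ ω, Real.cos (φ n ω) ∂μ = εt) (hεne : εt ≠ 0)
    (hsymm : ∀ n, Measure.map (φ n) μ = Measure.map (fun ω => -(φ n ω)) μ)
    (hiid : iIndepFun φ μ)
    (hid : ∀ n m, IdentDistrib (φ n) (φ m) μ μ)
    (hφindep : IndepFun (fun ω n => φ n ω) (fun ω n => (g n ω, h n ω)) μ)
    (hghindep : IndepFun (fun ω n => g n ω) (fun ω n => h n ω) μ)
    (hRg : ∀ n i, ∫ ω, ‖g n ω‖ * ‖g i ω‖ ∂μ = Rbar n i)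
    (hRh : ∀ n i, ∫ ω, ‖h n ω‖ * ‖h i ω‖ ∂μ = Rbar n i)
    (hdiag : ∀ n, Rbar n n = 1)
    (hbounds : ∀ n i, n ≠ i → π / 4 ≤ Rbar n i ∧ Rbar n i < 1) :
    (∫ ω, ‖∑ n : Fin N,
        ((‖g n ω‖ * ‖h n ω‖ : ℝ) : ℂ) *
          Complex.exp (Complex.I * (φ n ω : ℝ))‖ ^ 2 ∂μ)
      = N * (1 - εt ^ 2) + εt ^ 2 * ∑ n : Fin N, ∑ i : Fin N, Rbar n i ^ 2 ∧
    (N : ℝ) + π ^ 2 / 16 * N * (N - 1) * εt ^ 2 ≤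
      (∫ ω, ‖∑ n : Fin N,
        ((‖g n ω‖ * ‖h n ω‖ : ℝ) : ℂ) *
          Complex.exp (Complex.I * (φ n ω : ℝ))‖ ^ 2 ∂μ) ∧
    (∫ ω, ‖∑ n : Fin N,
        ((‖g n ω‖ * ‖h n ω‖ : ℝ) : ℂ) *
          Complex.exp (Complex.I * (φ n ω : ℝ))‖ ^ 2 ∂μ)
      < (N : ℝ) + N * (N - 1) * εt ^ 2 := by
  -- abbreviations
  set A : Fin N → Ω → ℝ := fun n ω => ‖g n ω‖ * ‖h n ω‖ with hA
  have hAmeas : ∀ n, Measurable (A n) := fun n =>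
    (continuous_norm.measurable.comp (hgmeas n)).mul (continuous_norm.measurable.comp (hhmeas n))
  -- sin has zero mean
  have hsin : ∀ n, ∫ ω, Real.sin (φ n ω) ∂μ = 0 := by
    intro n
    have e1 : ∫ ω, Real.sin (φ n ω) ∂μ = ∫ x, Real.sin x ∂(Measure.map (φ n) μ) :=
      (integral_map (hφmeas n).aemeasurable
        Real.continuous_sin.measurable.aestronglyMeasurable).symm
    have e2 : ∫ x, Real.sin x ∂(Measure.map (fun ω => -(φ n ω)) μ)
        = ∫ ω, Real.sin (-(φ n ω)) ∂μ :=
      integral_map (hφmeas n).neg.aemeasurable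
        Real.continuous_sin.measurable.aestronglyMeasurable
    have e3 : ∫ ω, Real.sin (-(φ n ω)) ∂μ = -∫ ω, Real.sin (φ n ω) ∂μ := by
      simp [Real.sin_neg, integral_neg]
    have : ∫ ω, Real.sin (φ n ω) ∂μ = -∫ ω, Real.sin (φ n ω) ∂μ := by
      conv_lhs => rw [e1, hsymm n]
      rw [e2, e3]
    linarith
  -- bounded measurable functions are integrable
  have hbd : ∀ (f : Ω → ℝ), Measurable f → (∀ ω, |f ω| ≤ 1) → Integrable f μ := by
    intro f hf hb
    refine Integrable.mono' (integrable_const 1) hf.aestronglyMeasurable ?_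
    filter_upwards with ω
    simpa [Real.norm_eq_abs] using hb ω
  -- mixed cosine expectation
  have hmix : ∀ n i : Fin N, ∫ ω, Real.cos (φ n ω - φ i ω) ∂μ
      = if n = i then 1 else εt ^ 2 := by
    intro n i
    by_cases hni : n = i
    · subst hni; simp
    · simp only [hni, if_false]
      have hind : IndepFun (φ n) (φ i) μ := hiid.indepFun hni
      have hcc : IndepFun (fun ω => Real.cos (φ n ω)) (fun ω => Real.cos (φ i ω)) μ :=
        hind.comp Real.measurable_cos Real.measurable_cos
      have hss : IndepFun (fun ω => Real.sin (φ n ω)) (fun ω => Real.sin (φ i ω)) μ :=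
        hind.comp Real.measurable_sin Real.measurable_sin
      have i1 : Integrable (fun ω => Real.cos (φ n ω) * Real.cos (φ i ω)) μ := by
        refine hbd _ (((hφmeas n).cos).mul ((hφmeas i).cos)) fun ω => ?_
        rw [abs_mul]
        exact mul_le_one₀ (Real.abs_cos_le_one _) (abs_nonneg _) (Real.abs_cos_le_one _)
      have i2 : Integrable (fun ω => Real.sin (φ n ω) * Real.sin (φ i ω)) μ := by
        refine hbd _ (((hφmeas n).sin).mul ((hφmeas i).sin)) fun ω => ?_
        rw [abs_mul]
        exact mul_le_one₀ (Real.abs_sin_le_one _) (abs_nonneg _) (Real.abs_sin_le_one _)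
      calc ∫ ω, Real.cos (φ n ω - φ i ω) ∂μ
          = ∫ ω, (Real.cos (φ n ω) * Real.cos (φ i ω)
              + Real.sin (φ n ω) * Real.sin (φ i ω)) ∂μ := by
            simp only [Real.cos_sub]
        _ = (∫ ω, Real.cos (φ n ω) * Real.cos (φ i ω) ∂μ)
              + ∫ ω, Real.sin (φ n ω) * Real.sin (φ i ω) ∂μ := integral_add i1 i2
        _ = (∫ ω, Real.cos (φ n ω) ∂μ) * (∫ ω, Real.cos (φ i ω) ∂μ)
              + (∫ ω, Real.sin (φ n ω) ∂μ) * (∫ ω, Real.sin (φ i ω) ∂μ) := by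
            rw [hcc.integral_fun_mul_eq_mul_integral ((hφmeas n).cos.aestronglyMeasurable)
                ((hφmeas i).cos.aestronglyMeasurable),
              hss.integral_fun_mul_eq_mul_integral ((hφmeas n).sin.aestronglyMeasurable)
                ((hφmeas i).sin.aestronglyMeasurable)]
        _ = εt ^ 2 := by rw [hεt n, hεt i, hsin n, hsin i]; ring
  -- expectation of A n * A i
  have hAA : ∀ n i : Fin N, ∫ ω, (‖g n ω‖ * ‖g i ω‖)
      * (‖h n ω‖ * ‖h i ω‖) ∂μ = Rbar n i * Rbar n i := by
    intro n i
    have mF1 : Measurable (fun v : Fin N → ℂ => ‖v n‖ * ‖v i‖) :=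
      (continuous_norm.measurable.comp (measurable_pi_apply n)).mul
        (continuous_norm.measurable.comp (measurable_pi_apply i))
    have hI2 : IndepFun
        (fun ω => ‖g n ω‖ * ‖g i ω‖)
        (fun ω => ‖h n ω‖ * ‖h i ω‖) μ :=
      hghindep.comp mF1 mF1
    have hGmeas : Measurable fun ω => ‖g n ω‖ * ‖g i ω‖ :=
      (continuous_norm.measurable.comp (hgmeas n)).mul (continuous_norm.measurable.comp (hgmeas i))
    have hHmeas : Measurable fun ω => ‖h n ω‖ * ‖h i ω‖ :=
      (continuous_norm.measurable.comp (hhmeas n)).mul (continuous_norm.measurable.comp (hhmeas i))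
    rw [hI2.integral_fun_mul_eq_mul_integral hGmeas.aestronglyMeasurable hHmeas.aestronglyMeasurable,
      hRg n i, hRh n i]
  -- expectation of each term
  have hT : ∀ n i : Fin N, ∫ ω, A n ω * A i ω * Real.cos (φ n ω - φ i ω) ∂μ
      = (if n = i then 1 else εt ^ 2) * Rbar n i ^ 2 := by
    intro n i
    have mfc : Measurable (fun v : Fin N → ℝ => Real.cos (v n - v i)) :=
      ((measurable_pi_apply n).sub (measurable_pi_apply i)).cos
    have mF : Measurable (fun w : Fin N → ℂ × ℂ =>
        (‖(w n).1‖ * ‖(w i).1‖)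
          * (‖(w n).2‖ * ‖(w i).2‖)) :=
      ((continuous_norm.measurable.comp (measurable_pi_apply n).fst).mul
        (continuous_norm.measurable.comp (measurable_pi_apply i).fst)).mul
      ((continuous_norm.measurable.comp (measurable_pi_apply n).snd).mul
        (continuous_norm.measurable.comp (measurable_pi_apply i).snd))
    have hI1 : IndepFun
        (fun ω => Real.cos (φ n ω - φ i ω))
        (fun ω => (‖g n ω‖ * ‖g i ω‖)
          * (‖h n ω‖ * ‖h i ω‖)) μ :=
      hφindep.comp mfc mF
    have hcmeas : Measurable fun ω => Real.cos (φ n ω - φ i ω) :=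
      ((hφmeas n).sub (hφmeas i)).cos
    have hpmeas : Measurable fun ω => (‖g n ω‖ * ‖g i ω‖)
        * (‖h n ω‖ * ‖h i ω‖) :=
      ((continuous_norm.measurable.comp (hgmeas n)).mul
        (continuous_norm.measurable.comp (hgmeas i))).mul
      ((continuous_norm.measurable.comp (hhmeas n)).mul
        (continuous_norm.measurable.comp (hhmeas i)))
    have key := hI1.integral_fun_mul_eq_mul_integral hcmeas.aestronglyMeasurable hpmeas.aestronglyMeasurable
    have hre : (fun ω => A n ω * A i ω * Real.cos (φ n ω - φ i ω))
        = fun ω => Real.cos (φ n ω - φ i ω)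
          * ((‖g n ω‖ * ‖g i ω‖)
            * (‖h n ω‖ * ‖h i ω‖)) := by
      funext ω; simp only [hA]; ring
    rw [hre, key, hmix n i, hAA n i]
    ring
  -- integrability of each term
  have hTint : ∀ n i : Fin N,
      Integrable (fun ω => A n ω * A i ω * Real.cos (φ n ω - φ i ω)) μ := by
    intro n i
    have haa : Integrable (fun ω => A n ω * A i ω) μ := by
      have := ((hL2 i).smul (hL2 n)
        (p := 2) (q := 2) (r := 1) : MemLp ((A n) • (A i)) 1 μ)
      have h2 : ((A n) • (A i)) = fun ω => A n ω * A i ω := rfl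
      rw [h2] at this
      exact memLp_one_iff_integrable.mp this
    refine Integrable.mono' haa.abs
      (((hAmeas n).mul (hAmeas i)).mul ((hφmeas n).sub (hφmeas i)).cos).aestronglyMeasurable ?_
    filter_upwards with ω
    rw [Real.norm_eq_abs, abs_mul]
    exact mul_le_of_le_one_right (abs_nonneg _) (Real.abs_cos_le_one _)
  -- main equality
  have hptw : ∀ ω, ‖∑ n : Fin N,
      ((‖g n ω‖ * ‖h n ω‖ : ℝ) : ℂ) *
        Complex.exp (Complex.I * (φ n ω : ℝ))‖ ^ 2
      = ∑ n : Fin N, ∑ i : Fin N, A n ω * A i ω * Real.cos (φ n ω - φ i ω) :=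
    fun ω => aux_expand (fun n => A n ω) (fun n => φ n ω)
  have hE : (∫ ω, ‖∑ n : Fin N,
      ((‖g n ω‖ * ‖h n ω‖ : ℝ) : ℂ) *
        Complex.exp (Complex.I * (φ n ω : ℝ))‖ ^ 2 ∂μ)
      = ∑ n : Fin N, ∑ i : Fin N, (if n = i then 1 else εt ^ 2) * Rbar n i ^ 2 := by
    rw [integral_congr_ae (Filter.Eventually.of_forall hptw)]
    rw [integral_finset_sum _ (fun n _ => integrable_finset_sum _ (fun i _ => hTint n i))]
    refine Finset.sum_congr rfl fun n _ => ?_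
    rw [integral_finset_sum _ (fun i _ => hTint n i)]
    exact Finset.sum_congr rfl fun i _ => hT n i
  set S : ℝ := ∑ n : Fin N, ∑ i : Fin N, Rbar n i ^ 2 with hS
  have hsum : (∑ n : Fin N, ∑ i : Fin N, (if n = i then 1 else εt ^ 2) * Rbar n i ^ 2)
      = N * (1 - εt ^ 2) + εt ^ 2 * S := by
    have : ∀ n i : Fin N, (if n = i then 1 else εt ^ 2) * Rbar n i ^ 2
        = εt ^ 2 * Rbar n i ^ 2 + (if n = i then (1 - εt ^ 2) else 0) := by
      intro n i
      by_cases hni : n = i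
      · subst hni; simp [hdiag n]
      · simp [hni]
    simp only [this, Finset.sum_add_distrib, Finset.sum_ite_eq, Finset.mem_univ, if_true,
      Finset.sum_const, Finset.card_univ, Fintype.card_fin, nsmul_eq_mul, ← Finset.mul_sum]
    rw [hS]; ring
  rw [hsum] at hE
  -- bounds on S
  have hε2 : 0 < εt ^ 2 := lt_of_le_of_ne (sq_nonneg εt) (Ne.symm (pow_ne_zero 2 hεne))
  have hS_low : (N : ℝ) + π ^ 2 / 16 * N * (N - 1) ≤ S := by
    have h1 : ∀ n : Fin N, ∀ i : Fin N,
        (π ^ 2 / 16 + if n = i then (1 - π ^ 2 / 16) else 0) ≤ Rbar n i ^ 2 := by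
      intro n i
      by_cases hni : n = i
      · subst hni; simp [hdiag n]
      · simp only [hni, if_false, add_zero]
        nlinarith [(hbounds n i hni).1, Real.pi_pos]
    have h2 : (∑ n : Fin N, ∑ i : Fin N,
        (π ^ 2 / 16 + if n = i then (1 - π ^ 2 / 16) else 0)) ≤ S := by
      refine Finset.sum_le_sum fun n _ => Finset.sum_le_sum fun i _ => h1 n i
    have h3 : (∑ n : Fin N, ∑ i : Fin N,
        (π ^ 2 / 16 + if n = i then (1 - π ^ 2 / 16) else 0))
        = (N : ℝ) + π ^ 2 / 16 * N * (N - 1) := by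
      simp only [Finset.sum_add_distrib, Finset.sum_ite_eq, Finset.mem_univ, if_true,
        Finset.sum_const, Finset.card_univ, Fintype.card_fin, nsmul_eq_mul]
      ring
    linarith
  have hS_high : S < (N : ℝ) * N := by
    have hrw : S = ∑ p ∈ (Finset.univ ×ˢ Finset.univ : Finset (Fin N × Fin N)),
        Rbar p.1 p.2 ^ 2 := by
      rw [hS, Finset.sum_product]
    have hz : (⟨0, by omega⟩ : Fin N) ≠ ⟨1, by omega⟩ := by
      intro hc; simpa using congrArg Fin.val hc
    have hle : ∀ p ∈ (Finset.univ ×ˢ Finset.univ : Finset (Fin N × Fin N)),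
        Rbar p.1 p.2 ^ 2 ≤ 1 := by
      rintro ⟨n, i⟩ -
      by_cases hni : n = i
      · subst hni; simp [hdiag n]
      · obtain ⟨hl, hu⟩ := hbounds n i hni
        nlinarith [Real.pi_pos]
    have hwit : ((⟨0, by omega⟩ : Fin N), (⟨1, by omega⟩ : Fin N))
        ∈ (Finset.univ ×ˢ Finset.univ : Finset (Fin N × Fin N)) := by simp
    have hstrict : Rbar ⟨0, by omega⟩ ⟨1, by omega⟩ ^ 2 < 1 := by
      obtain ⟨hl, hu⟩ := hbounds _ _ hz
      nlinarith [Real.pi_pos]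
    have hlt : S < ∑ _p ∈ (Finset.univ ×ˢ Finset.univ : Finset (Fin N × Fin N)), (1 : ℝ) := by
      rw [hrw]
      exact Finset.sum_lt_sum hle ⟨_, hwit, hstrict⟩
    have hcard : (∑ _p ∈ (Finset.univ ×ˢ Finset.univ : Finset (Fin N × Fin N)), (1 : ℝ))
        = (N : ℝ) * N := by
      simp [Finset.sum_const, Finset.card_univ, mul_comm]
    rw [hcard] at hlt
    exact hlt
  refine ⟨hE, ?_, ?_⟩
  · rw [hE]
    nlinarith [mul_le_mul_of_nonneg_left hS_low hε2.le]
  · rw [hE]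
    nlinarith [mul_lt_mul_of_pos_left hS_high hε2]
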